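/- Let M be a right R-module that is pure extending, and let M = N ⊕ N' be a direct sum decomposition. Then N is pure extending. -/
import Mathlib

universe u v w

/-- `I • P` realized as the span of products `r • p`, `r ∈ I`, `p ∈ P`. -/
def idealSMul {R : Type u} [Ring R] {M : Type v} [AddCommGroup M] [Module R M]
    (I : Ideal R) (N : Submodule R M) : Submodule R M :=
  Submodule.span R {x | ∃ r ∈ I, ∃ n ∈ N, r • n = x}

/-- A submodule `P ≤ M` is pure if `I P = I M ⊓ P` for every finitely generated ideal `I`. -/
def IsPureSubmodule {R : Type u} [Ring R] {M : Type v} [AddCommGroup M] [Module R M]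
    (P : Submodule R M) : Prop :=
  ∀ I : Ideal R, I.FG → idealSMul I P = idealSMul I (⊤ : Submodule R M) ⊓ P

/-- `P` is an essential submodule of `D`. -/
def IsEssentialIn {R : Type u} [Ring R] {M : Type v} [AddCommGroup M] [Module R M]
    (P D : Submodule R M) : Prop :=
  P ≤ D ∧ ∀ X : Submodule R M, X ≤ D → X ≠ ⊥ → X ⊓ P ≠ ⊥

/-- `D` is a direct summand of `M`. -/
def IsDirectSummand {R : Type u} [Ring R] {M : Type v} [AddCommGroup M] [Module R M]
    (D : Submodule R M) : Prop :=
  ∃ C : Submodule R M, IsCompl D C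

/-- `M` is pure extending: every pure submodule is essential in a direct summand. -/
def PureExtending (R : Type u) [Ring R] (M : Type v) [AddCommGroup M] [Module R M] : Prop :=
  ∀ P : Submodule R M, IsPureSubmodule P →
    ∃ D : Submodule R M, IsDirectSummand D ∧ IsEssentialIn P D

section lemmas
variable {R : Type u} [Ring R] {M : Type v} [AddCommGroup M] [Module R M]
  {M₂ : Type w} [AddCommGroup M₂] [Module R M₂]

theorem idealSMul_le (I : Ideal R) (A : Submodule R M) : idealSMul I A ≤ A := by
  apply Submodule.span_le.2
  rintro x ⟨r, -, n, hn, rfl⟩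
  exact A.smul_mem r hn

theorem idealSMul_mono (I : Ideal R) {A B : Submodule R M} (hAB : A ≤ B) :
    idealSMul I A ≤ idealSMul I B := by
  apply Submodule.span_mono
  rintro x ⟨r, hr, n, hn, rfl⟩
  exact ⟨r, hr, n, hAB hn, rfl⟩

theorem idealSMul_sup (I : Ideal R) (A B : Submodule R M) :
    idealSMul I (A ⊔ B) = idealSMul I A ⊔ idealSMul I B := by
  refine le_antisymm ?_ (sup_le (idealSMul_mono I le_sup_left) (idealSMul_mono I le_sup_right))
  apply Submodule.span_le.2
  rintro x ⟨r, hr, n, hn, rfl⟩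
  obtain ⟨a, ha, b, hb, rfl⟩ := Submodule.mem_sup.1 hn
  rw [smul_add]
  exact Submodule.add_mem _
    (Submodule.mem_sup_left (Submodule.subset_span ⟨r, hr, a, ha, rfl⟩))
    (Submodule.mem_sup_right (Submodule.subset_span ⟨r, hr, b, hb, rfl⟩))

theorem idealSMul_map (I : Ideal R) (f : M →ₗ[R] M₂) (A : Submodule R M) :
    idealSMul I (A.map f) = (idealSMul I A).map f := by
  unfold idealSMul
  rw [Submodule.map_span]
  congr 1
  ext x
  constructor
  · rintro ⟨r, hr, n, ⟨m, hm, rfl⟩, rfl⟩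
    exact ⟨r • m, ⟨r, hr, m, hm, rfl⟩, map_smul f r m⟩
  · rintro ⟨y, ⟨r, hr, m, hm, rfl⟩, rfl⟩
    exact ⟨r, hr, f m, ⟨m, hm, rfl⟩, (map_smul f r m).symm⟩

end lemmas

/-- a direct summand of a pure extending module is pure extending. -/
theorem stmt_0 {R : Type u} [Ring R] {M : Type v} [AddCommGroup M] [Module R M]
    (hM : PureExtending R M) (N N' : Submodule R M) (h : IsCompl N N') :
    PureExtending R ↥N := by
  intro P hP
  set P₀ : Submodule R M := P.map N.subtype with hP₀
  have hP₀N : P₀ ≤ N := by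
    rintro x ⟨p, hp, rfl⟩; exact p.2
  set Q : Submodule R M := P₀ ⊔ N' with hQdef
  -- key transfer: idealSMul I N ⊓ P₀ = idealSMul I P₀
  have hkey : ∀ I : Ideal R, I.FG → idealSMul I N ⊓ P₀ = idealSMul I P₀ := by
    intro I hI
    have := congrArg (Submodule.map N.subtype) (hP I hI)
    rw [← idealSMul_map, Submodule.map_inf _ N.injective_subtype, ← idealSMul_map,
      Submodule.map_subtype_top] at this
    exact this.symm
  -- Q is pure in M
  have hQpure : IsPureSubmodule Q := by
    intro I hI
    refine le_antisymm (le_inf (idealSMul_mono I le_top) (idealSMul_le I Q)) ?_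
    rintro x ⟨hx1, hx2⟩
    have htop : (⊤ : Submodule R M) = N ⊔ N' := h.codisjoint.eq_top.symm
    rw [htop, idealSMul_sup] at hx1
    obtain ⟨a, ha, b, hb, rfl⟩ := Submodule.mem_sup.1 hx1
    obtain ⟨p, hp, n', hn', hpn⟩ := Submodule.mem_sup.1 hx2
    have haN : a ∈ N := idealSMul_le I N ha
    have hbN' : b ∈ N' := idealSMul_le I N' hb
    have hap : a = p := by
      have h1 : a - p ∈ N := N.sub_mem haN (hP₀N hp)
      have h2 : a - p ∈ N' := by
        have : a - p = n' - b := by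
          have := hpn
          abel_nf
          linear_combination (norm := abel) -this
        rw [this]; exact N'.sub_mem hn' hbN'
      have := h.disjoint.le_bot ⟨h1, h2⟩
      rw [Submodule.mem_bot] at this
      exact sub_eq_zero.1 this
    have haP : a ∈ idealSMul I P₀ := by
      rw [← hkey I hI]; exact ⟨ha, hap ▸ hp⟩
    exact Submodule.add_mem _
      (idealSMul_mono I (le_sup_left : P₀ ≤ Q) haP)
      (idealSMul_mono I (le_sup_right : N' ≤ Q) hb)
  obtain ⟨D, ⟨C, hC⟩, hQD, hQess⟩ := hM Q hQpure
  have hN'D : N' ≤ D := le_trans le_sup_right hQD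
  -- D₁ = D ⊓ N
  set D₁ : Submodule R M := D ⊓ N with hD₁def
  have hD₁N : D₁ ≤ N := inf_le_right
  -- D = N' ⊔ D₁ (modular law)
  have hDdecomp : D = N' ⊔ D₁ := by
    have := sup_inf_assoc_of_le N (hN'D)
    calc D = (N' ⊔ N) ⊓ D := by rw [(h.symm).codisjoint.eq_top, top_inf_eq]
    _ = N' ⊔ (N ⊓ D) := this
    _ = N' ⊔ D₁ := by rw [inf_comm]
  -- D₁ ⊓ (N' ⊔ C) = ⊥
  have hdisj : D₁ ⊓ (N' ⊔ C) = ⊥ := by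
    rw [eq_bot_iff]
    rintro x ⟨⟨hxD, hxN⟩, hx2⟩
    obtain ⟨n', hn', c, hc, rfl⟩ := Submodule.mem_sup.1 hx2
    have hcD : c ∈ D := by
      have : c = (n' + c) - n' := by abel
      rw [this]; exact D.sub_mem hxD (hN'D hn')
    have hc0 : c = 0 := by
      have := hC.disjoint.le_bot (⟨hcD, hc⟩ : c ∈ D ⊓ C)
      rwa [Submodule.mem_bot] at this
    have hn0 : n' = 0 := by
      have hxN' : n' + c ∈ N' := by rw [hc0, add_zero]; exact hn'
      have := h.disjoint.le_bot (⟨hxN, hxN'⟩ : n' + c ∈ N ⊓ N')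
      rw [Submodule.mem_bot] at this
      rw [hc0, add_zero] at this
      exact this
    simp [hn0, hc0]
  -- the summand of N
  set Dn : Submodule R ↥N := D₁.comap N.subtype with hDn
  refine ⟨Dn, ⟨(N' ⊔ C).comap N.subtype, ?_, ?_⟩, ?_, ?_⟩
  · -- disjoint
    rw [disjoint_iff, eq_bot_iff]
    rintro x ⟨hx1, hx2⟩
    have : (x : M) ∈ D₁ ⊓ (N' ⊔ C) := ⟨hx1, hx2⟩
    rw [hdisj, Submodule.mem_bot] at this
    simpa [Submodule.mem_bot] using Subtype.ext this
  · -- codisjoint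
    rw [codisjoint_iff, eq_top_iff]
    rintro x -
    have hxM : (x : M) ∈ D ⊔ C := by rw [hC.codisjoint.eq_top]; trivial
    obtain ⟨d, hd, c, hc, hdc⟩ := Submodule.mem_sup.1 hxM
    rw [hDdecomp] at hd
    obtain ⟨n', hn', d₁, hd₁, rfl⟩ := Submodule.mem_sup.1 hd
    have hd₁N : d₁ ∈ N := hD₁N hd₁
    have hrest : n' + c ∈ N := by
      have : n' + c = (x : M) - d₁ := by rw [← hdc]; abel
      rw [this]; exact N.sub_mem x.2 hd₁N
    refine Submodule.mem_sup.2 ⟨⟨d₁, hd₁N⟩, hd₁, ⟨n' + c, hrest⟩,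
      Submodule.mem_sup.2 ⟨n', hn', c, hc, rfl⟩, ?_⟩
    apply Subtype.ext
    simp only [Submodule.coe_add]
    rw [← hdc]; abel
  · -- P ≤ Dn
    intro p hp
    have hpQ : (p : M) ∈ Q := Submodule.mem_sup_left (Submodule.mem_map_of_mem hp)
    exact ⟨hQD hpQ, p.2⟩
  · -- essentiality
    intro X hXD hXne
    obtain ⟨x, hxX, hxne⟩ := Submodule.exists_mem_ne_zero_of_ne_bot hXne
    set X₀ : Submodule R M := X.map N.subtype with hX₀
    have hX₀D : X₀ ≤ D := by
      rintro y ⟨z, hz, rfl⟩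
      exact (hXD hz).1
    have hX₀ne : X₀ ≠ ⊥ := by
      intro hbot
      apply hxne
      have : (x : M) ∈ (⊥ : Submodule R M) := hbot ▸ Submodule.mem_map_of_mem hxX
      rw [Submodule.mem_bot] at this
      exact Subtype.ext this
    have := hQess X₀ hX₀D hX₀ne
    obtain ⟨y, ⟨hyX₀, hyQ⟩, hyne⟩ := Submodule.exists_mem_ne_zero_of_ne_bot this
    obtain ⟨z, hzX, rfl⟩ := hyX₀
    obtain ⟨p, hp, n', hn', hpn⟩ := Submodule.mem_sup.1 hyQ
    simp only [Submodule.subtype_apply] at hpn hyne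
    have hn'0 : n' = 0 := by
      have h1 : n' ∈ N := by
        have : n' = (z : M) - p := by rw [← hpn]; abel
        rw [this]; exact N.sub_mem z.2 (hP₀N hp)
      have := h.disjoint.le_bot (⟨h1, hn'⟩ : n' ∈ N ⊓ N')
      rwa [Submodule.mem_bot] at this
    have hzP : z ∈ P := by
      obtain ⟨w, hw, hweq⟩ := hp
      have : (z : M) = (w : M) := by rw [← hpn, hn'0, add_zero]; exact hweq.symm
      have hzw : z = w := Subtype.ext this
      rw [hzw]; exact hw
    rw [Submodule.ne_bot_iff]
    exact ⟨z, ⟨hzX, hzP⟩, fun h0 => hyne (by rw [h0]; rfl)⟩
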